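/- arXiv:math/0410166 — 2 statements merged into one kernel-verified Lean document; each statement's English description precedes it below -/
import Mathlib

section
/- If ζ̂ is a strong memoryless time for (ζ,V) with parameters (γ,μ), then the function σ(t) := ℙ(ζ̂ ≤ t, ζ > t) satisfies condition (3.1), and the function G(t) = σ(t)e^{γt} is nondecreasing and right-continuous on ℝ₊. -/
open MeasureTheory ProbabilityTheory Real Set

/-- The exponential distribution on `[0, ∞)` with mean `γ⁻¹` (rate `γ`), as a measure on `ℝ`. -/
noncomputable def expν (γ : ℝ) : Measure ℝ :=
  MeasureTheory.volume.withDensity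
    (fun x => if 0 ≤ x then ENNReal.ofReal (γ * Real.exp (-γ * x)) else 0)

lemma expν_eq (γ : ℝ) : expν γ = ProbabilityTheory.expMeasure γ := by
  rw [expν, ProbabilityTheory.expMeasure, ProbabilityTheory.gammaMeasure]
  congr 1
  funext x
  rw [show ProbabilityTheory.gammaPDF 1 γ x = ProbabilityTheory.exponentialPDF γ x from rfl,
    ProbabilityTheory.exponentialPDF_eq]
  split_ifs with h
  · rw [neg_mul]
  · simp

lemma expν_prob {γ : ℝ} (hγ : 0 < γ) : IsProbabilityMeasure (expν γ) := by
  rw [expν_eq]; exact ProbabilityTheory.isProbabilityMeasure_expMeasure hγ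

lemma expν_Ioi {γ : ℝ} (hγ : 0 < γ) {a : ℝ} (ha : 0 ≤ a) :
    expν γ (Ioi a) = ENNReal.ofReal (Real.exp (-(γ * a))) := by
  haveI := expν_prob hγ
  have hexp : Real.exp (-(γ * a)) ≤ 1 := by
    rw [← Real.exp_zero]
    exact Real.exp_le_exp.mpr (by nlinarith)
  have hIic : expν γ (Iic a) = ENNReal.ofReal (1 - Real.exp (-(γ * a))) := by
    have h := ProbabilityTheory.lintegral_exponentialPDF_eq_antiDeriv hγ a
    rw [if_pos ha] at h
    rw [expν_eq, ProbabilityTheory.expMeasure, ProbabilityTheory.gammaMeasure,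
      withDensity_apply _ measurableSet_Iic]
    exact h
  rw [← Set.compl_Iic, measure_compl measurableSet_Iic (measure_ne_top _ _), measure_univ, hIic,
    ← ENNReal.ofReal_one, ← ENNReal.ofReal_sub 1 (by linarith), sub_sub_cancel]

/-- Theorem 3.1 (converse part): if `ζ̂` is a strong memoryless time for `(ζ, V)` with
parameters `(γ, μ)`, then `σ(t) := ℙ(ζ̂ ≤ t, ζ > t)` satisfies condition (3.1), and
`G(t) = σ(t)e^{γt}` is nondecreasing and right-continuous on `ℝ₊`. -/
theorem stmt_2 {Ω : Type*} [MeasurableSpace Ω] (P : Measure Ω) [IsProbabilityMeasure P]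
    {S : Type*} [MeasurableSpace S] (μ : Measure S) [IsProbabilityMeasure μ]
    (γ : ℝ) (hγ : 0 < γ)
    (ζ : Ω → ℝ) (V : Ω → S) (hζm : Measurable ζ) (hVm : Measurable V)
    (hζ0 : ∀ ω, 0 ≤ ζ ω)
    (ζhat : Ω → ℝ) (hζhatm : Measurable ζhat) (hζhat0 : ∀ ω, 0 ≤ ζhat ω)
    (hle : P {ω | ζhat ω ≤ ζ ω} = 1)
    (hcond : ∀ t, 0 ≤ t → 0 < P {ω | ζhat ω ≤ t ∧ t < ζ ω} →
      Measure.map (fun ω => (ζ ω - t, V ω)) (P[|{ω | ζhat ω ≤ t ∧ t < ζ ω}]) =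
        (expν γ).prod μ) :
    (∀ t, 0 ≤ t → ∀ C : Set (ℝ × S), MeasurableSet C →
      0 < ((expν γ).prod μ) C →
      ENNReal.ofReal ((P {ω | ζhat ω ≤ t ∧ t < ζ ω}).toReal) ≤
        P ((fun ω => (ζ ω - t, V ω)) ⁻¹' C) / ((expν γ).prod μ) C) ∧
    (∀ s t, 0 ≤ s → s ≤ t →
      (P {ω | ζhat ω ≤ s ∧ s < ζ ω}).toReal * Real.exp (γ * s) ≤
        (P {ω | ζhat ω ≤ t ∧ t < ζ ω}).toReal * Real.exp (γ * t)) ∧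
    (∀ t, 0 ≤ t →
      ContinuousWithinAt
        (fun u => (P {ω | ζhat ω ≤ u ∧ u < ζ ω}).toReal * Real.exp (γ * u))
        (Set.Ici t) t) := by
  haveI := expν_prob hγ
  have hA : ∀ t : ℝ, MeasurableSet {ω | ζhat ω ≤ t ∧ t < ζ ω} := fun t =>
    (measurableSet_le hζhatm measurable_const).inter (measurableSet_lt measurable_const hζm)
  have hA' : ∀ t u : ℝ, MeasurableSet {ω | ζhat ω ≤ u ∧ t < ζ ω} := fun t u =>
    (measurableSet_le hζhatm measurable_const).inter (measurableSet_lt measurable_const hζm)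
  -- key identity
  have key : ∀ t : ℝ, 0 ≤ t → 0 < P {ω | ζhat ω ≤ t ∧ t < ζ ω} →
      ∀ C : Set (ℝ × S), MeasurableSet C →
      P ({ω | ζhat ω ≤ t ∧ t < ζ ω} ∩ (fun ω => (ζ ω - t, V ω)) ⁻¹' C) =
        P {ω | ζhat ω ≤ t ∧ t < ζ ω} * ((expν γ).prod μ) C := by
    intro t ht hpos C hCm
    have hf : Measurable fun ω => (ζ ω - t, V ω) := (hζm.sub measurable_const).prodMk hVm
    have h2 : (P[|{ω | ζhat ω ≤ t ∧ t < ζ ω}]) ((fun ω => (ζ ω - t, V ω)) ⁻¹' C) =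
        ((expν γ).prod μ) C := by
      rw [← Measure.map_apply hf hCm, hcond t ht hpos]
    rw [ProbabilityTheory.cond_apply (hA t)] at h2
    rw [← h2, ← mul_assoc, ENNReal.mul_inv_cancel hpos.ne' (measure_ne_top _ _), one_mul]
  -- key probability computation
  have key2 : ∀ s t : ℝ, 0 ≤ s → s ≤ t →
      P {ω | ζhat ω ≤ s ∧ t < ζ ω} =
        P {ω | ζhat ω ≤ s ∧ s < ζ ω} * ENNReal.ofReal (Real.exp (-(γ * (t - s)))) := by
    intro s t hs hst
    rcases (zero_le (a := P {ω | ζhat ω ≤ s ∧ s < ζ ω})).eq_or_lt with h0 | hpos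
    · have hsub : {ω | ζhat ω ≤ s ∧ t < ζ ω} ⊆ {ω | ζhat ω ≤ s ∧ s < ζ ω} := by
        intro ω ⟨h1, h2⟩; exact ⟨h1, by linarith⟩
      have := measure_mono (μ := P) hsub
      rw [← h0] at this
      rw [le_zero_iff.mp this, ← h0, zero_mul]
    · have hk := key s hs hpos (Ioi (t - s) ×ˢ (univ : Set S))
        (measurableSet_Ioi.prod MeasurableSet.univ)
      rw [Measure.prod_prod, measure_univ, mul_one, expν_Ioi hγ (by linarith)] at hk
      have hset : {ω | ζhat ω ≤ s ∧ s < ζ ω} ∩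
          (fun ω => (ζ ω - s, V ω)) ⁻¹' (Ioi (t - s) ×ˢ (univ : Set S)) =
          {ω | ζhat ω ≤ s ∧ t < ζ ω} := by
        ext ω
        simp only [Set.mem_inter_iff, Set.mem_setOf_eq, Set.mem_preimage, Set.mem_prod,
          Set.mem_Ioi, Set.mem_univ, and_true]
        constructor
        · rintro ⟨⟨h1, h2⟩, h3⟩; exact ⟨h1, by linarith⟩
        · rintro ⟨h1, h2⟩; exact ⟨⟨h1, by linarith⟩, by linarith⟩
      rw [hset] at hk
      exact hk
  -- Part 2
  have part2 : ∀ s t : ℝ, 0 ≤ s → s ≤ t →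
      (P {ω | ζhat ω ≤ s ∧ s < ζ ω}).toReal * Real.exp (γ * s) ≤
        (P {ω | ζhat ω ≤ t ∧ t < ζ ω}).toReal * Real.exp (γ * t) := by
    intro s t hs hst
    have hsub : {ω | ζhat ω ≤ s ∧ t < ζ ω} ⊆ {ω | ζhat ω ≤ t ∧ t < ζ ω} := by
      intro ω ⟨h1, h2⟩; exact ⟨by linarith, h2⟩
    have h1 : P {ω | ζhat ω ≤ s ∧ s < ζ ω} * ENNReal.ofReal (Real.exp (-(γ * (t - s)))) ≤
        P {ω | ζhat ω ≤ t ∧ t < ζ ω} := by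
      rw [← key2 s t hs hst]; exact measure_mono hsub
    have h2 : (P {ω | ζhat ω ≤ s ∧ s < ζ ω}).toReal * Real.exp (-(γ * (t - s))) ≤
        (P {ω | ζhat ω ≤ t ∧ t < ζ ω}).toReal := by
      have := ENNReal.toReal_mono (measure_ne_top _ _) h1
      rwa [ENNReal.toReal_mul, ENNReal.toReal_ofReal (Real.exp_nonneg _)] at this
    have h3 : (P {ω | ζhat ω ≤ s ∧ s < ζ ω}).toReal * Real.exp (γ * s) =
        ((P {ω | ζhat ω ≤ s ∧ s < ζ ω}).toReal * Real.exp (-(γ * (t - s)))) *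
          Real.exp (γ * t) := by
      rw [mul_assoc, ← Real.exp_add]; ring_nf
    rw [h3]
    exact mul_le_mul_of_nonneg_right h2 (Real.exp_nonneg _)
  refine ⟨?_, part2, ?_⟩
  -- Part 1
  · intro t ht C hCm hC
    rw [ENNReal.ofReal_toReal (measure_ne_top _ _),
      ENNReal.le_div_iff_mul_le (Or.inl hC.ne') (Or.inl (measure_ne_top _ _))]
    rcases (zero_le (a := P {ω | ζhat ω ≤ t ∧ t < ζ ω})).eq_or_lt with h0 | hpos
    · rw [← h0, zero_mul]; exact zero_le
    · calc P {ω | ζhat ω ≤ t ∧ t < ζ ω} * ((expν γ).prod μ) C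
          = P ({ω | ζhat ω ≤ t ∧ t < ζ ω} ∩ (fun ω => (ζ ω - t, V ω)) ⁻¹' C) :=
            (key t ht hpos C hCm).symm
        _ ≤ P ((fun ω => (ζ ω - t, V ω)) ⁻¹' C) := measure_mono inter_subset_right
  -- Part 3
  · intro t ht
    rw [← continuousWithinAt_Ioi_iff_Ici]
    have hint : (⋂ r > t, {ω | ζhat ω ≤ r ∧ t < ζ ω}) = {ω | ζhat ω ≤ t ∧ t < ζ ω} := by
      ext ω
      simp only [Set.mem_iInter, Set.mem_setOf_eq, Set.mem_Ioi]
      constructor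
      · intro h
        refine ⟨le_of_forall_gt_imp_ge_of_dense fun c hc => (h c hc).1, (h (t + 1) (by linarith)).2⟩
      · rintro ⟨h1, h2⟩ r hr
        exact ⟨h1.trans hr.le, h2⟩
    have hF : Filter.Tendsto (fun u => P {ω | ζhat ω ≤ u ∧ t < ζ ω}) (nhdsWithin t (Ioi t))
        (nhds (P {ω | ζhat ω ≤ t ∧ t < ζ ω})) := by
      have := tendsto_measure_biInter_gt (μ := P)
        (s := fun u => {ω | ζhat ω ≤ u ∧ t < ζ ω}) (a := t)
        (fun r _ => (hA' t r).nullMeasurableSet)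
        (fun i j _ hij => fun ω ⟨h1, h2⟩ => ⟨h1.trans hij, h2⟩)
        ⟨t + 1, by linarith, measure_ne_top _ _⟩
      rwa [hint] at this
    have hFr : Filter.Tendsto (fun u => (P {ω | ζhat ω ≤ u ∧ t < ζ ω}).toReal)
        (nhdsWithin t (Ioi t)) (nhds ((P {ω | ζhat ω ≤ t ∧ t < ζ ω}).toReal)) :=
      (ENNReal.tendsto_toReal (measure_ne_top _ _)).comp hF
    have hexp : Filter.Tendsto (fun u => Real.exp (γ * u)) (nhdsWithin t (Ioi t))
        (nhds (Real.exp (γ * t))) :=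
      ((Real.continuous_exp.comp (continuous_const.mul continuous_id)).tendsto t).mono_left
        nhdsWithin_le_nhds
    have hH : Filter.Tendsto
        (fun u => (P {ω | ζhat ω ≤ u ∧ t < ζ ω}).toReal * Real.exp (γ * u))
        (nhdsWithin t (Ioi t))
        (nhds ((P {ω | ζhat ω ≤ t ∧ t < ζ ω}).toReal * Real.exp (γ * t))) := hFr.mul hexp
    refine tendsto_of_tendsto_of_tendsto_of_le_of_le' tendsto_const_nhds hH ?_ ?_
    · filter_upwards [self_mem_nhdsWithin] with u hu
      exact part2 t u ht (le_of_lt hu)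
    · filter_upwards [self_mem_nhdsWithin] with u hu
      have hsub : {ω | ζhat ω ≤ u ∧ u < ζ ω} ⊆ {ω | ζhat ω ≤ u ∧ t < ζ ω} := by
        intro ω ⟨h1, h2⟩
        exact ⟨h1, lt_trans hu h2⟩
      exact mul_le_mul_of_nonneg_right
        (ENNReal.toReal_mono (measure_ne_top _ _) (measure_mono hsub)) (Real.exp_nonneg _)
end

section
/- Suppose the law of the nonnegative random variable ζ is absolutely continuous with respect to ν_γ with a density f : ℝ₊ → ℝ₊ that is nondecreasing and right-continuous, and set σ(t) = f(t)e^{−γt}. Then σ takes values in [0,1], and any nonnegative random variable ζ̂ defined on the same probability space as ζ satisfying ℙ(ζ̂ ≤ t, ζ ≤ u) = ℙ(ζ ≤ min(t,u)) + σ(t)(1 − e^{−γ·max(u−t,0)}) for all t, u ∈ ℝ₊ satisfies ℙ(ζ̂ < ζ) = 1 and ℙ(ζ̂ ≤ t) = f(t)e^{−γt} + ℙ(ζ ≤ t) for every t ∈ ℝ₊. -/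
open MeasureTheory ProbabilityTheory Real Set

lemma expν_Ioc {γ : ℝ} (hγ : 0 < γ) {a b : ℝ} (ha : 0 ≤ a) (hab : a ≤ b) :
    expν γ (Set.Ioc a b) = ENNReal.ofReal (Real.exp (-γ*a) - Real.exp (-γ*b)) := by
  rw [expν, withDensity_apply _ measurableSet_Ioc]
  rw [setLIntegral_congr_fun_ae measurableSet_Ioc
      (g := fun x => ENNReal.ofReal (γ * Real.exp (-γ*x)))
      (Filter.Eventually.of_forall (fun x hx => by
        simp only [if_pos (le_of_lt (lt_of_le_of_lt ha hx.1))]))]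
  have hint : ∀ x : ℝ, HasDerivAt (fun y => -Real.exp (-γ*y)) (γ * Real.exp (-γ*x)) x := by
    intro x
    have h1 : HasDerivAt (fun y => -γ*y) (-γ) x := by
      simpa using (hasDerivAt_id x).const_mul (-γ)
    have h2 := (h1.exp).neg
    refine h2.congr_deriv ?_
    ring
  have hcont : Continuous fun x => γ * Real.exp (-γ*x) := by continuity
  have hI : ∫ x in a..b, γ * Real.exp (-γ*x) = Real.exp (-γ*a) - Real.exp (-γ*b) := by
    rw [intervalIntegral.integral_eq_sub_of_hasDerivAt (fun x _ => hint x)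
      (hcont.intervalIntegrable a b)]
    ring
  rw [← hI, intervalIntegral.integral_of_le hab,
    ← ofReal_integral_eq_lintegral_ofReal]
  · exact (hcont.integrableOn_Ioc).integrable
  · exact Filter.Eventually.of_forall fun x => by positivity

lemma expν_Iic_zero {γ : ℝ} : expν γ (Set.Iic 0) = 0 := by
  rw [expν, withDensity_apply _ measurableSet_Iic]
  have h0 : ∀ᵐ x ∂(volume : Measure ℝ), x ≠ 0 := by
    rw [ae_iff]
    simpa using measure_singleton (0:ℝ)
  rw [setLIntegral_congr_fun_ae measurableSet_Iic (g := fun _ => 0) ?_]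
  · simp
  · filter_upwards [h0] with x hx hmem
    rw [if_neg (not_le.mpr (lt_of_le_of_ne hmem hx))]


lemma real_key {γ a b fa fb : ℝ} (hγ : 0 < γ) (ha : 0 ≤ a) (hab : a ≤ b)
    (hfa : 0 ≤ fa) (hf : fa ≤ fb) :
    fb * (Real.exp (-γ*a) - Real.exp (-γ*b)) ≤
      (fb - fa) * (γ * (b - a)) + fa * Real.exp (-γ*a) * (1 - Real.exp (-γ*(b-a))) := by
  have h1 : Real.exp (-γ*b) = Real.exp (-γ*a) * Real.exp (-γ*(b-a)) := by
    rw [← Real.exp_add]; ring_nf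
  have h2 : Real.exp (-γ*a) ≤ 1 := Real.exp_le_one_iff.mpr (by nlinarith)
  have h2' : 0 < Real.exp (-γ*a) := Real.exp_pos _
  have h3 : Real.exp (-γ*(b-a)) ≤ 1 := Real.exp_le_one_iff.mpr (by nlinarith)
  have h4 : 1 - Real.exp (-γ*(b-a)) ≤ γ*(b-a) := by
    nlinarith [Real.add_one_le_exp (-γ*(b-a))]
  nlinarith [mul_nonneg (sub_nonneg.mpr hf) (sub_nonneg.mpr h3),
    mul_nonneg (mul_nonneg (sub_nonneg.mpr hf) (sub_nonneg.mpr h3)) (sub_nonneg.mpr h2),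
    mul_le_mul_of_nonneg_left h4 (sub_nonneg.mpr hf)]

/-- Remark 3.3(2): if the law of `ζ` has a nondecreasing, right-continuous density `f`
with respect to `ν_γ`, then `σ(t) = f(t)e^{−γt}` takes values in `[0,1]` and any strong
memoryless time `ζ̂` built from this `σ` via identity (3.2) satisfies `ℙ(ζ̂ < ζ) = 1`
(i.e. `χ ≡ 1`) and `ℙ(ζ̂ ≤ t) = f(t)e^{−γt} + ℙ(ζ ≤ t)` for every `t ∈ ℝ₊`. -/
theorem stmt_14 {Ω : Type*} [MeasurableSpace Ω] (P : Measure Ω) [IsProbabilityMeasure P]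
    (γ : ℝ) (hγ : 0 < γ)
    (ζ : Ω → ℝ) (hζm : Measurable ζ) (hζ0 : ∀ ω, 0 ≤ ζ ω)
    (f : ℝ → ℝ) (hfm : Measurable f) (hf0 : ∀ x, 0 ≤ f x)
    (hfmono : ∀ s t, 0 ≤ s → s ≤ t → f s ≤ f t)
    (hfrc : ∀ t, 0 ≤ t → ContinuousWithinAt f (Set.Ici t) t)
    (hdens : Measure.map ζ P = (expν γ).withDensity (fun x => ENNReal.ofReal (f x))) :
    (∀ t, 0 ≤ t → f t * Real.exp (-γ * t) ∈ Set.Icc (0 : ℝ) 1) ∧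
    (∀ ζhat : Ω → ℝ, Measurable ζhat → (∀ ω, 0 ≤ ζhat ω) →
      (∀ t u, 0 ≤ t → 0 ≤ u →
        P {ω | ζhat ω ≤ t ∧ ζ ω ≤ u} =
          P {ω | ζ ω ≤ min t u} +
            ENNReal.ofReal
              (f t * Real.exp (-γ * t) * (1 - Real.exp (-γ * max (u - t) 0)))) →
      P {ω | ζhat ω < ζ ω} = 1 ∧
      (∀ t, 0 ≤ t →
        P {ω | ζhat ω ≤ t} =
          ENNReal.ofReal (f t * Real.exp (-γ * t)) + P {ω | ζ ω ≤ t})) := by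
  set μ : Measure ℝ := (expν γ).withDensity (fun x => ENNReal.ofReal (f x)) with hμ
  -- the cdf of ζ
  have hF : ∀ t : ℝ, P {ω | ζ ω ≤ t} = μ (Set.Iic t) := by
    intro t
    rw [← hdens, Measure.map_apply hζm measurableSet_Iic]
    rfl
  have hμIoc : ∀ a b : ℝ, 0 ≤ a → a ≤ b →
      μ (Set.Ioc a b) ≤ ENNReal.ofReal (f b * (Real.exp (-γ*a) - Real.exp (-γ*b))) := by
    intro a b ha hab
    rw [hμ, withDensity_apply _ measurableSet_Ioc]
    calc ∫⁻ x in Set.Ioc a b, ENNReal.ofReal (f x) ∂(expν γ)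
        ≤ ∫⁻ _ in Set.Ioc a b, ENNReal.ofReal (f b) ∂(expν γ) := by
          refine setLIntegral_mono_ae (by fun_prop) ?_
          exact Filter.Eventually.of_forall fun x hx =>
            ENNReal.ofReal_le_ofReal (hfmono x b (le_of_lt (lt_of_le_of_lt ha hx.1)) hx.2)
      _ = ENNReal.ofReal (f b) * expν γ (Set.Ioc a b) := by
          rw [setLIntegral_const]
      _ = ENNReal.ofReal (f b * (Real.exp (-γ*a) - Real.exp (-γ*b))) := by
          rw [expν_Ioc hγ ha hab, ← ENNReal.ofReal_mul (hf0 b)]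
  have hμIoc_ge : ∀ a b : ℝ, 0 ≤ a → a ≤ b →
      ENNReal.ofReal (f a * (Real.exp (-γ*a) - Real.exp (-γ*b))) ≤ μ (Set.Ioc a b) := by
    intro a b ha hab
    rw [hμ, withDensity_apply _ measurableSet_Ioc]
    calc ENNReal.ofReal (f a * (Real.exp (-γ*a) - Real.exp (-γ*b)))
        = ENNReal.ofReal (f a) * expν γ (Set.Ioc a b) := by
          rw [expν_Ioc hγ ha hab, ← ENNReal.ofReal_mul (hf0 a)]
      _ = ∫⁻ _ in Set.Ioc a b, ENNReal.ofReal (f a) ∂(expν γ) := by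
          rw [setLIntegral_const]
      _ ≤ ∫⁻ x in Set.Ioc a b, ENNReal.ofReal (f x) ∂(expν γ) := by
          refine setLIntegral_mono_ae (by fun_prop) ?_
          exact Filter.Eventually.of_forall fun x hx =>
            ENNReal.ofReal_le_ofReal (hfmono a x ha (le_of_lt hx.1))
  have hF0 : P {ω | ζ ω ≤ 0} = 0 := by
    rw [hF, hμ, withDensity_apply _ measurableSet_Iic]
    rw [Measure.restrict_zero_set expν_Iic_zero]
    simp
  have hFsplit : ∀ a b : ℝ, 0 ≤ a → a ≤ b →
      P {ω | ζ ω ≤ b} = P {ω | ζ ω ≤ a} + μ (Set.Ioc a b) := by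
    intro a b ha hab
    rw [hF, hF, ← Set.Iic_union_Ioc_eq_Iic hab,
      measure_union (Set.Iic_disjoint_Ioc le_rfl) measurableSet_Ioc]
  have hμuniv : μ Set.univ = 1 := by
    rw [← hdens, Measure.map_apply hζm MeasurableSet.univ]
    simp
  -- Part 1
  have part1 : ∀ t, 0 ≤ t → f t * Real.exp (-γ * t) ∈ Set.Icc (0 : ℝ) 1 := by
    intro t ht
    constructor
    · exact mul_nonneg (hf0 t) (Real.exp_pos _).le
    · have key : ∀ b : ℝ, t ≤ b → f t * (Real.exp (-γ*t) - Real.exp (-γ*b)) ≤ 1 := by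
        intro b hb
        have h1 : ENNReal.ofReal (f t * (Real.exp (-γ*t) - Real.exp (-γ*b))) ≤ 1 := by
          refine le_trans (hμIoc_ge t b ht hb) ?_
          rw [← hμuniv]
          exact measure_mono (Set.subset_univ _)
        have := ENNReal.ofReal_le_one.mp h1
        exact this
      have htend : Filter.Tendsto (fun b : ℝ => f t * (Real.exp (-γ*t) - Real.exp (-γ*b)))
          Filter.atTop (nhds (f t * Real.exp (-γ*t))) := by
        have h2 : Filter.Tendsto (fun b : ℝ => Real.exp (-γ*b)) Filter.atTop (nhds 0) := by
          have hb : Filter.Tendsto (fun b : ℝ => -γ*b) Filter.atTop Filter.atBot := by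
            exact Filter.Tendsto.const_mul_atTop_of_neg (neg_neg_iff_pos.mpr hγ) Filter.tendsto_id
          exact Real.tendsto_exp_atBot.comp hb
        have := ((tendsto_const_nhds (x := Real.exp (-γ*t))).sub h2).const_mul (f t)
        simpa using this
      exact le_of_tendsto htend (Filter.eventually_atTop.mpr ⟨t, key⟩)
  refine ⟨part1, ?_⟩
  intro ζhat hm h0 h32
  have hmeas2 : ∀ a b : ℝ, MeasurableSet {ω | ζhat ω ≤ a ∧ ζ ω ≤ b} := by
    intro a b
    exact (measurableSet_le hm measurable_const).inter (measurableSet_le hζm measurable_const)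
  have hBA : ∀ a : ℝ, 0 ≤ a → P {ω | ζhat ω ≤ a ∧ ζ ω ≤ a} = P {ω | ζ ω ≤ a} := by
    intro a ha
    rw [h32 a a ha ha]
    simp
  -- Part (b)
  have claim_b : ∀ t, 0 ≤ t → P {ω | ζhat ω ≤ t} =
      ENNReal.ofReal (f t * Real.exp (-γ*t)) + P {ω | ζ ω ≤ t} := by
    intro t ht
    have hmono : Monotone (fun n : ℕ => {ω | ζhat ω ≤ t ∧ ζ ω ≤ (n:ℝ)}) := by
      intro m n hmn ω hω
      exact ⟨hω.1, hω.2.trans (by exact_mod_cast hmn)⟩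
    have hU : ⋃ n : ℕ, {ω | ζhat ω ≤ t ∧ ζ ω ≤ (n:ℝ)} = {ω | ζhat ω ≤ t} := by
      ext ω
      simp only [Set.mem_iUnion, Set.mem_setOf_eq]
      constructor
      · rintro ⟨n, hω, -⟩; exact hω
      · intro hω
        obtain ⟨n, hn⟩ := exists_nat_ge (ζ ω)
        exact ⟨n, hω, hn⟩
    have h1 : Filter.Tendsto (fun n : ℕ => P {ω | ζhat ω ≤ t ∧ ζ ω ≤ (n:ℝ)})
        Filter.atTop (nhds (P {ω | ζhat ω ≤ t})) := by
      rw [← hU]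
      exact tendsto_measure_iUnion_atTop hmono
    have h2 : Filter.Tendsto (fun n : ℕ => P {ω | ζhat ω ≤ t ∧ ζ ω ≤ (n:ℝ)})
        Filter.atTop (nhds (P {ω | ζ ω ≤ t} + ENNReal.ofReal (f t * Real.exp (-γ*t)))) := by
      have hev : ∀ᶠ n : ℕ in Filter.atTop,
          P {ω | ζ ω ≤ t} + ENNReal.ofReal
            (f t * Real.exp (-γ*t) * (1 - Real.exp (-γ * ((n:ℝ) - t)))) =
          P {ω | ζhat ω ≤ t ∧ ζ ω ≤ (n:ℝ)} := by
        filter_upwards [Filter.eventually_ge_atTop ⌈t⌉₊] with n hn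
        have hnt : t ≤ (n:ℝ) := le_trans (Nat.le_ceil t) (by exact_mod_cast hn)
        rw [h32 t n ht (le_trans ht hnt), min_eq_left hnt, max_eq_left (by linarith)]
      refine Filter.Tendsto.congr' hev ?_
      refine Filter.Tendsto.add tendsto_const_nhds ?_
      refine ENNReal.tendsto_ofReal ?_
      have he : Filter.Tendsto (fun n : ℕ => Real.exp (-γ * ((n:ℝ) - t)))
          Filter.atTop (nhds 0) := by
        apply Real.tendsto_exp_atBot.comp
        apply Filter.Tendsto.const_mul_atTop_of_neg (neg_neg_iff_pos.mpr hγ)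
        exact Filter.tendsto_atTop_add_const_right _ (-t) tendsto_natCast_atTop_atTop
      have := ((tendsto_const_nhds (x := (1:ℝ))).sub he).const_mul (f t * Real.exp (-γ*t))
      simpa using this
    have huniq := tendsto_nhds_unique h1 h2
    rw [huniq, add_comm]
  -- ζ < ζhat is null
  have hlt : P {ω | ζ ω < ζhat ω} = 0 := by
    have hsub : {ω | ζ ω < ζhat ω} ⊆
        ⋃ q : ℚ, ({ω | ζ ω ≤ |(q:ℝ)|} \ {ω | ζhat ω ≤ |(q:ℝ)| ∧ ζ ω ≤ |(q:ℝ)|}) := by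
      intro ω hω
      obtain ⟨q, hq1, hq2⟩ := exists_rat_btwn (show ζ ω < ζhat ω from hω)
      have hq0 : (0:ℝ) ≤ (q:ℝ) := le_trans (hζ0 ω) hq1.le
      refine Set.mem_iUnion.mpr ⟨q, ?_, ?_⟩
      · rw [abs_of_nonneg hq0]
        exact hq1.le
      · rw [abs_of_nonneg hq0]
        rintro ⟨hc, -⟩
        exact absurd hc (not_le.mpr hq2)
    refine measure_mono_null hsub (measure_iUnion_null fun q => ?_)
    have ha : (0:ℝ) ≤ |(q:ℝ)| := abs_nonneg _
    have hsub2 : {ω | ζhat ω ≤ |(q:ℝ)| ∧ ζ ω ≤ |(q:ℝ)|} ⊆ {ω | ζ ω ≤ |(q:ℝ)|} :=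
      fun ω hω => hω.2
    rw [measure_diff hsub2 ((hmeas2 _ _).nullMeasurableSet) (measure_ne_top P _),
      hBA _ ha, tsub_self]
  -- ζ = ζhat is null
  have heqnull : P {ω | ζ ω = ζhat ω} = 0 := by
    have hN : ∀ N : ℕ, P {ω | ζ ω = ζhat ω ∧ ζ ω ≤ (N:ℝ)} = 0 := by
      intro N
      have key : ∀ n : ℕ, 0 < n →
          P {ω | ζ ω = ζhat ω ∧ ζ ω ≤ (N:ℝ)} ≤ ENNReal.ofReal (γ/n * f N) := by
        intro n hn
        have hn0 : (0:ℝ) < n := by exact_mod_cast hn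
        set C : ℕ → Set Ω := fun k =>
          {ω | ζhat ω ≤ ((k:ℝ)+1)/n ∧ ζ ω ≤ ((k:ℝ)+1)/n} \
          {ω | ζhat ω ≤ (k:ℝ)/n ∧ ζ ω ≤ ((k:ℝ)+1)/n} with hC
        have hCk : ∀ k : ℕ, P (C k) ≤
            ENNReal.ofReal (γ/n * (f (((k:ℝ)+1)/n) - f ((k:ℝ)/n))) := by
          intro k
          set a : ℝ := (k:ℝ)/n with hadef
          set b : ℝ := ((k:ℝ)+1)/n with hbdef
          have ha : 0 ≤ a := by positivity
          have hab : a ≤ b := by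
            rw [hadef, hbdef, div_le_div_iff_of_pos_right hn0]
            linarith
          have hba : b - a = 1/n := by
            rw [hadef, hbdef]; field_simp; ring
          have hsub2 : {ω | ζhat ω ≤ a ∧ ζ ω ≤ b} ⊆ {ω | ζhat ω ≤ b ∧ ζ ω ≤ b} :=
            fun ω hω => ⟨hω.1.trans hab, hω.2⟩
          have hCeq : C k = {ω | ζhat ω ≤ b ∧ ζ ω ≤ b} \ {ω | ζhat ω ≤ a ∧ ζ ω ≤ b} := rfl
          rw [hCeq, measure_diff hsub2
            ((hmeas2 _ _).nullMeasurableSet) (measure_ne_top P _), tsub_le_iff_right]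
          rw [hBA b (ha.trans hab), h32 a b ha (ha.trans hab), min_eq_left hab,
            max_eq_left (sub_nonneg.mpr hab), hFsplit a b ha hab]
          have hfab : f a ≤ f b := hfmono a b ha hab
          have hD : Real.exp (-γ*(b-a)) ≤ 1 := Real.exp_le_one_iff.mpr (by nlinarith)
          calc P {ω | ζ ω ≤ a} + μ (Set.Ioc a b)
              ≤ P {ω | ζ ω ≤ a} +
                ENNReal.ofReal (f b * (Real.exp (-γ*a) - Real.exp (-γ*b))) :=
                add_le_add_right (hμIoc a b ha hab) _
            _ ≤ P {ω | ζ ω ≤ a} +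
                (ENNReal.ofReal ((f b - f a) * (γ * (b-a))) +
                 ENNReal.ofReal (f a * Real.exp (-γ*a) * (1 - Real.exp (-γ*(b-a))))) := by
                refine add_le_add_right ?_ _
                rw [← ENNReal.ofReal_add
                  (mul_nonneg (sub_nonneg.mpr hfab) (mul_nonneg hγ.le (sub_nonneg.mpr hab)))
                  (mul_nonneg (mul_nonneg (hf0 a) (Real.exp_pos _).le) (sub_nonneg.mpr hD))]
                exact ENNReal.ofReal_le_ofReal (real_key hγ ha hab (hf0 a) hfab)
            _ = ENNReal.ofReal (γ/n * (f b - f a)) +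
                (P {ω | ζ ω ≤ a} +
                 ENNReal.ofReal (f a * Real.exp (-γ*a) * (1 - Real.exp (-γ*(b-a))))) := by
                rw [hba]
                ring_nf
          -- final: need the exponent form to match h32's `b - a`
        have hcover : {ω | ζ ω = ζhat ω ∧ ζ ω ≤ (N:ℝ)} ⊆
            {ω | ζ ω ≤ 0} ∪ ⋃ k ∈ Finset.range (n*N), C k := by
          rintro ω ⟨hωe, hωN⟩
          rcases le_or_gt (ζ ω) 0 with hv | hv
          · exact Or.inl hv
          · right
            have hnv : 0 < (n:ℝ) * ζ ω := by positivity
            have hck : 1 ≤ ⌈(n:ℝ) * ζ ω⌉₊ := Nat.one_le_ceil_iff.mpr hnv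
            set k : ℕ := ⌈(n:ℝ) * ζ ω⌉₊ - 1 with hk
            have hk1 : (k:ℝ) + 1 = (⌈(n:ℝ) * ζ ω⌉₊ : ℝ) := by
              rw [hk, Nat.cast_sub hck]
              push_cast
              ring
            have hkmem : k ∈ Finset.range (n*N) := by
              rw [Finset.mem_range]
              have hle : ⌈(n:ℝ) * ζ ω⌉₊ ≤ n*N := by
                rw [Nat.ceil_le]
                push_cast
                exact mul_le_mul_of_nonneg_left hωN (by positivity)
              omega
            have hvle : ζ ω ≤ ((k:ℝ)+1)/n := by
              rw [hk1, le_div_iff₀ hn0, mul_comm]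
              exact Nat.le_ceil _
            have hklt : (k:ℝ) < (n:ℝ) * ζ ω := by
              have hcl := Nat.ceil_lt_add_one (le_of_lt hnv)
              rw [← hk1] at hcl
              linarith
            refine Set.mem_biUnion hkmem ⟨⟨by rw [← hωe]; exact hvle, hvle⟩, ?_⟩
            rintro ⟨hc, -⟩
            rw [← hωe] at hc
            rw [le_div_iff₀ hn0] at hc
            nlinarith
        calc P {ω | ζ ω = ζhat ω ∧ ζ ω ≤ (N:ℝ)}
            ≤ P ({ω | ζ ω ≤ 0} ∪ ⋃ k ∈ Finset.range (n*N), C k) := measure_mono hcover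
          _ ≤ P {ω | ζ ω ≤ 0} + P (⋃ k ∈ Finset.range (n*N), C k) := measure_union_le _ _
          _ ≤ 0 + ∑ k ∈ Finset.range (n*N), P (C k) := by
              rw [hF0]
              exact add_le_add_right (measure_biUnion_finset_le _ _) 0
          _ ≤ ∑ k ∈ Finset.range (n*N),
              ENNReal.ofReal (γ/n * (f (((k:ℝ)+1)/n) - f ((k:ℝ)/n))) := by
              rw [zero_add]
              exact Finset.sum_le_sum fun k _ => hCk k
          _ = ENNReal.ofReal (∑ k ∈ Finset.range (n*N),
              γ/n * (f (((k:ℝ)+1)/n) - f ((k:ℝ)/n))) := by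
              rw [ENNReal.ofReal_sum_of_nonneg]
              intro k _
              have : f ((k:ℝ)/n) ≤ f (((k:ℝ)+1)/n) := by
                apply hfmono _ _ (by positivity)
                rw [div_le_div_iff_of_pos_right hn0]
                linarith
              have hγn : 0 ≤ γ/(n:ℝ) := by positivity
              nlinarith
          _ ≤ ENNReal.ofReal (γ/n * f N) := by
              apply ENNReal.ofReal_le_ofReal
              rw [← Finset.mul_sum]
              have hsum : ∑ k ∈ Finset.range (n*N),
                  (f (((k:ℝ)+1)/n) - f ((k:ℝ)/n)) = f ((n*N:ℕ)/(n:ℝ)) - f ((0:ℕ)/(n:ℝ)) := by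
                rw [← Finset.sum_range_sub (fun k : ℕ => f ((k:ℝ)/n)) (n*N)]
                apply Finset.sum_congr rfl
                intro k _
                push_cast
                ring_nf
              rw [hsum]
              have h1 : ((n*N:ℕ):ℝ)/(n:ℝ) = (N:ℝ) := by
                push_cast
                field_simp
              have h2 : ((0:ℕ):ℝ)/(n:ℝ) = 0 := by simp
              rw [h1, h2]
              have := hf0 0
              have hγn : 0 ≤ γ/(n:ℝ) := by positivity
              nlinarith
      have htend0 : Filter.Tendsto (fun n : ℕ => ENNReal.ofReal (γ/n * f N))
          Filter.atTop (nhds 0) := by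
        rw [← ENNReal.ofReal_zero]
        apply ENNReal.tendsto_ofReal
        have h := (tendsto_const_div_atTop_nhds_zero_nat γ).mul_const (f N)
        simpa using h
      have hle := ge_of_tendsto htend0
        (Filter.eventually_atTop.mpr ⟨1, fun n hn => key n hn⟩)
      exact le_antisymm (by simpa using hle) zero_le
    have hsub : {ω | ζ ω = ζhat ω} ⊆ ⋃ N : ℕ, {ω | ζ ω = ζhat ω ∧ ζ ω ≤ (N:ℝ)} := by
      intro ω hω
      obtain ⟨N, hN'⟩ := exists_nat_ge (ζ ω)
      exact Set.mem_iUnion.mpr ⟨N, hω, hN'⟩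
    exact measure_mono_null hsub (measure_iUnion_null hN)
  constructor
  · have hms : MeasurableSet {ω | ζhat ω < ζ ω} := measurableSet_lt hm hζm
    refine (prob_compl_eq_zero_iff hms).mp ?_
    have hcompl : {ω | ζhat ω < ζ ω}ᶜ = {ω | ζ ω ≤ ζhat ω} := by
      ext ω; simp [not_lt]
    rw [hcompl]
    have hsub : {ω | ζ ω ≤ ζhat ω} ⊆ {ω | ζ ω < ζhat ω} ∪ {ω | ζ ω = ζhat ω} := by
      intro ω hω
      rcases lt_or_eq_of_le (show ζ ω ≤ ζhat ω from hω) with h | h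
      · exact Or.inl h
      · exact Or.inr h
    exact measure_mono_null hsub (measure_union_null hlt heqnull)
  · exact claim_b
end
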